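/- For even n ≥ 2, the complete graph K_n admits a 1-factorization into n - 1 pairwise disjoint perfect matchings (Walecki's construction). -/

import Mathlib

namespace Walecki7

variable {n : ℕ}

/-- Adjacency in the `i`-th Walecki matching. -/
def adj (n : ℕ) (i : ZMod (n-1)) (x y : Fin n) : Prop :=
  x ≠ y ∧ ((x.val = n-1 ∧ ((y.val : ℕ) : ZMod (n-1)) = i) ∨
           (y.val = n-1 ∧ ((x.val : ℕ) : ZMod (n-1)) = i) ∨
           (x.val ≠ n-1 ∧ y.val ≠ n-1 ∧
              ((x.val : ZMod (n-1)) + (y.val : ZMod (n-1)) = 2*i)))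

lemma adj_symm {i : ZMod (n-1)} {x y : Fin n} (h : adj n i x y) : adj n i y x := by
  obtain ⟨hne, h⟩ := h
  refine ⟨hne.symm, ?_⟩
  rcases h with h | h | ⟨h1, h2, h3⟩
  · exact Or.inr (Or.inl h)
  · exact Or.inl h
  · exact Or.inr (Or.inr ⟨h2, h1, by rw [add_comm]; exact h3⟩)

lemma cast_fin_inj (h2 : 2 ≤ n) {x y : Fin n} (hx : x.val < n-1) (hy : y.val < n-1)
    (h : ((x.val : ℕ) : ZMod (n-1)) = y.val) : x = y := by
  haveI : NeZero (n-1) := ⟨by omega⟩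
  have := congrArg ZMod.val h
  rw [ZMod.val_natCast_of_lt hx, ZMod.val_natCast_of_lt hy] at this
  exact Fin.ext this

lemma val_cast (h2 : 2 ≤ n) (i : ZMod (n-1)) :
    haveI : NeZero (n-1) := ⟨by omega⟩
    ((i.val : ℕ) : ZMod (n-1)) = i := by
  haveI : NeZero (n-1) := ⟨by omega⟩
  simp [ZMod.natCast_val, ZMod.cast_id]

lemma lt_of_ne {x : Fin n} (h : x.val ≠ n-1) : x.val < n-1 := by
  have := x.isLt; omega

lemma adj_unique (h2 : 2 ≤ n) {i : ZMod (n-1)} {x y z : Fin n}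
    (hy : adj n i x y) (hz : adj n i x z) : y = z := by
  haveI : NeZero (n-1) := ⟨by omega⟩
  obtain ⟨hxy, hy⟩ := hy
  obtain ⟨hxz, hz⟩ := hz
  have hlast : ∀ a b : Fin n, a.val = n-1 → b.val = n-1 → a = b :=
    fun a b ha hb => Fin.ext (ha.trans hb.symm)
  rcases hy with ⟨h1, h2'⟩ | ⟨h1, h2'⟩ | ⟨h1, h1', h3⟩ <;>
    rcases hz with ⟨g1, g2⟩ | ⟨g1, g2⟩ | ⟨g1, g1', g3⟩
  · have hy' : y.val < n-1 := lt_of_ne (fun h => hxy (hlast _ _ h1 h))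
    have hz' : z.val < n-1 := lt_of_ne (fun h => hxz (hlast _ _ h1 h))
    exact cast_fin_inj h2 hy' hz' (h2'.trans g2.symm)
  · exact absurd (hlast _ _ h1 g1) hxz
  · exact absurd h1 g1
  · exact absurd (hlast _ _ g1 h1) hxy
  · exact hlast _ _ h1 g1
  · -- y last; x cast = i; x + z = 2i ⇒ z cast = x cast ⇒ z = x : contra
    exfalso; apply hxz
    exact (cast_fin_inj h2 (lt_of_ne g1') (lt_of_ne g1)
      (by linear_combination g3 - 2 * h2')).symm
  · exact absurd g1 h1
  · exfalso; apply hxy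
    exact (cast_fin_inj h2 (lt_of_ne h1') (lt_of_ne h1)
      (by linear_combination h3 - 2 * g2)).symm
  · exact cast_fin_inj h2 (lt_of_ne h1') (lt_of_ne g1')
      (by linear_combination h3 - g3)

lemma adj_exists (h2 : 2 ≤ n) (hu : IsUnit (2 : ZMod (n-1))) (i : ZMod (n-1)) (x : Fin n) :
    ∃ y, adj n i x y := by
  haveI : NeZero (n-1) := ⟨by omega⟩
  by_cases hx : x.val = n-1
  · refine ⟨⟨i.val, by have := ZMod.val_lt i; omega⟩, ?_, Or.inl ⟨hx, ?_⟩⟩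
    · intro h
      have hv : x.val = i.val := congrArg Fin.val h
      have := ZMod.val_lt i
      omega
    · exact val_cast h2 i
  · by_cases hxi : ((x.val : ℕ) : ZMod (n-1)) = i
    · refine ⟨⟨n-1, by omega⟩, fun h => hx (congrArg Fin.val h), Or.inr (Or.inl ⟨rfl, hxi⟩)⟩
    · have hzlt := ZMod.val_lt (2*i - (x.val : ZMod (n-1)))
      refine ⟨⟨(2*i - (x.val : ZMod (n-1))).val, by omega⟩, ?_,
        Or.inr (Or.inr ⟨hx, by simpa using by omega, ?_⟩)⟩
      · intro h
        have hv : x.val = (2*i - (x.val : ZMod (n-1))).val := congrArg Fin.val h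
        apply hxi
        have hc := val_cast h2 (2*i - (x.val : ZMod (n-1)))
        rw [← hv] at hc
        have h2e : 2 * ((x.val : ℕ) : ZMod (n-1)) = 2 * i := by linear_combination hc
        exact hu.mul_left_cancel h2e
      · show (x.val : ZMod (n-1)) + (((2*i - (x.val : ZMod (n-1))).val : ℕ) : ZMod (n-1)) = 2*i
        rw [val_cast h2]; ring

lemma adj_index_inj (h2 : 2 ≤ n) (hu : IsUnit (2 : ZMod (n-1))) {i j : ZMod (n-1)} {x y : Fin n}
    (hi : adj n i x y) (hj : adj n j x y) : i = j := by
  obtain ⟨hxy, hi⟩ := hi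
  obtain ⟨-, hj⟩ := hj
  rcases hi with ⟨h1, h2'⟩ | ⟨h1, h2'⟩ | ⟨h1, h1', h3⟩ <;>
    rcases hj with ⟨g1, g2⟩ | ⟨g1, g2⟩ | ⟨g1, g1', g3⟩
  · exact h2'.symm.trans g2
  · exact absurd (Fin.ext (h1.trans g1.symm) : x = y) hxy
  · exact absurd h1 g1
  · exact absurd (Fin.ext (g1.trans h1.symm) : x = y) hxy
  · exact h2'.symm.trans g2
  · exact absurd h1 g1'
  · exact absurd g1 h1
  · exact absurd g1 h1'
  · exact hu.mul_left_cancel (by linear_combination g3 - h3 : (2:ZMod (n-1)) * i = 2 * j)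

lemma adj_cover (hu : IsUnit (2 : ZMod (n-1))) {x y : Fin n} (hxy : x ≠ y) :
    ∃ i, adj n i x y := by
  by_cases hx : x.val = n-1
  · exact ⟨(y.val : ZMod (n-1)), hxy, Or.inl ⟨hx, rfl⟩⟩
  · by_cases hy : y.val = n-1
    · exact ⟨(x.val : ZMod (n-1)), hxy, Or.inr (Or.inl ⟨hy, rfl⟩)⟩
    · obtain ⟨u, hu2⟩ := hu
      refine ⟨(↑u⁻¹ : ZMod (n-1)) * ((x.val : ZMod (n-1)) + y.val),
        hxy, Or.inr (Or.inr ⟨hx, hy, ?_⟩)⟩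
      rw [← mul_assoc, ← hu2, Units.mul_inv, one_mul]

end Walecki7

open Walecki7 in
/-- For even `n ≥ 2`, the complete graph `K_n` admits a 1-factorization into
`n - 1` pairwise disjoint perfect matchings (Walecki's construction). -/
theorem stmt_7 (n : ℕ) (hn : Even n) (h2 : 2 ≤ n) :
    ∃ M : Fin (n - 1) → (⊤ : SimpleGraph (Fin n)).Subgraph,
      (∀ i, (M i).IsPerfectMatching) ∧
      (∀ i j, i ≠ j → Disjoint (M i).edgeSet (M j).edgeSet) ∧
      (∀ e ∈ (⊤ : SimpleGraph (Fin n)).edgeSet, ∃ i, e ∈ (M i).edgeSet) := by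
  haveI : NeZero (n-1) := ⟨by omega⟩
  have hu : IsUnit (2 : ZMod (n-1)) := by
    have hc : ((2:ℕ) : ZMod (n-1)) = 2 := by norm_cast
    rw [← hc, ZMod.isUnit_iff_coprime]
    refine Nat.coprime_two_left.mpr ?_
    obtain ⟨k, hk⟩ := hn
    exact ⟨k - 1, by omega⟩
  refine ⟨fun i => ⟨Set.univ, adj n ((i.val : ℕ) : ZMod (n-1)),
    fun h => h.1, fun _ => trivial, ⟨fun _ _ h => adj_symm h⟩⟩, ?_, ?_, ?_⟩
  · intro i
    constructor
    · intro v _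
      obtain ⟨w, hw⟩ := adj_exists h2 hu _ v
      exact ⟨w, hw, fun z hz => adj_unique h2 hz hw⟩
    · intro v; trivial
  · intro i j hij
    rw [Set.disjoint_left]
    intro e he he'
    induction e with
    | _ x y =>
      rw [SimpleGraph.Subgraph.mem_edgeSet] at he he'
      apply hij
      have h1 := adj_index_inj h2 hu he he'
      have h2 := congrArg ZMod.val h1
      rw [ZMod.val_natCast_of_lt (by omega), ZMod.val_natCast_of_lt (by omega)] at h2
      exact Fin.ext h2
  · intro e he
    induction e with
    | _ x y =>
      rw [SimpleGraph.mem_edgeSet, SimpleGraph.top_adj] at he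
      obtain ⟨i, hi⟩ := adj_cover hu he
      refine ⟨⟨i.val, ZMod.val_lt i⟩, ?_⟩
      rw [SimpleGraph.Subgraph.mem_edgeSet]
      show adj n _ x y
      rw [show (((⟨i.val, ZMod.val_lt i⟩ : Fin (n-1)).val : ℕ) : ZMod (n-1)) = i
        from val_cast h2 i]
      exact hi
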